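/- arXiv:1006.2632 — 2 statements merged into one kernel-verified Lean document; each statement's English description precedes it below -/
import Mathlib

section
/- Let p be a prime with p ≡ 1 (mod 3) and let K/Q_p be a totally ramified cubic abelian extension. Then a p-adic unit u in Z_p^* is a norm from K^* if and only if (u mod p) is a cube in F_p^*. -/
open Polynomial IntermediateField

section identities
variable {R : Type*} [CommRing R]

lemma cube_factor_identity (z t c : R) (hz : z ^ 2 + z + 1 = 0) :
    (t - c) * (t - z * c) * (t - z ^ 2 * c) = t ^ 3 - c ^ 3 := by
  linear_combination (c^3 - t^2*c - z*c^3 + z*t*c^2) * hz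

lemma cube_prod_identity (z t a c0 c1 c2 : R) (hz : z ^ 2 + z + 1 = 0) (ht : t ^ 3 = a) :
    (c0 + c1 * t + c2 * t ^ 2) * (c0 + c1 * (z * t) + c2 * (z * t) ^ 2) *
      (c0 + c1 * (z ^ 2 * t) + c2 * (z ^ 2 * t) ^ 2)
      = c0 ^ 3 + a * c1 ^ 3 + a ^ 2 * c2 ^ 3 - 3 * a * (c0 * c1 * c2) := by
  linear_combination (-a*c1^3 + 2*a*c0*c1*c2 - a^2*c2^3 + t*c0^2*c1 - t*a*c0*c2^2 + t^2*c0^2*c2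
    + t^3*c0*c1*c2 + t^4*c0*c2^2 - 2*z*a*c0*c1*c2 + z*a^2*c2^3 + z*t^2*c0*c1^2 - z*t^2*c0^2*c2
    + z*t^3*c1^3 + z^2*t*a*c0*c2^2 + z^2*t^2*c0^2*c2 + z^2*t^3*c0*c1*c2 - z^3*t*a*c0*c2^2
    + z^3*t^3*c0*c1*c2 - z^3*t^3*a*c2^3 + z^3*t^4*c1^2*c2 + z^4*t^4*c0*c2^2 + z^4*t^5*c1*c2^2
    + z^4*t^6*c2^3) * hz
    + (-c0*c1*c2 - t*c0*c2^2 - z*c1^3 - z*t*c0*c2^2 - z^2*c1^3 - 2*z^3*c0*c1*c2 + z^3*a*c2^3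
    - z^4*t^3*c2^3 - z^5*t*c0*c2^2 - z^5*t^3*c2^3) * ht

end identities

lemma aniso {F : Type*} [Field F] (w x0 x1 x2 : F) (hw : ∀ c : F, c ^ 3 ≠ w)
    (h : x0 ^ 3 + w * x1 ^ 3 + w ^ 2 * x2 ^ 3 - 3 * w * (x0 * x1 * x2) = 0) :
    x0 = 0 ∧ x1 = 0 ∧ x2 = 0 := by
  have hw0 : w ≠ 0 := fun h0 => hw 0 (by rw [h0]; ring)
  have hcube : ∀ X Y : F, X ^ 3 = w * Y ^ 3 → Y ≠ 0 → False := by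
    intro X Y hXY hY
    exact hw (X / Y) (by field_simp; linear_combination hXY)
  set A := x0 ^ 2 - w * (x1 * x2) with hAdef
  set B := w * x2 ^ 2 - x0 * x1 with hBdef
  set C := x1 ^ 2 - x0 * x2 with hCdef
  have hA2 : A ^ 2 = w * (B * C) := by rw [hAdef, hBdef, hCdef]; linear_combination x0 * h
  have hB2 : B ^ 2 = A * C := by rw [hAdef, hBdef, hCdef]; linear_combination x2 * h
  have hC2 : w * C ^ 2 = A * B := by rw [hAdef, hBdef, hCdef]; linear_combination x1 * h
  have hA : A = 0 := by
    by_contra hA0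
    have hB0 : B ≠ 0 := by
      intro h0
      rw [h0, zero_mul, mul_zero] at hA2
      exact hA0 (pow_eq_zero_iff (by norm_num)|>.mp hA2)
    exact hcube A B (by linear_combination A * hA2 - w * B * hB2) hB0
  have hC : C = 0 := by
    rw [hA, zero_mul] at hC2
    have := mul_eq_zero.mp hC2
    rcases this with h' | h'
    · exact absurd h' hw0
    · exact pow_eq_zero_iff (by norm_num)|>.mp h'
  have hB : B = 0 := by
    rw [hA, zero_mul] at hB2
    exact pow_eq_zero_iff (by norm_num)|>.mp hB2
  rw [hAdef] at hA; rw [hBdef] at hB; rw [hCdef] at hC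
  have hx1 : x1 = 0 := by
    by_contra h1
    exact hcube x0 x1 (by linear_combination x0 * hA - w * x1 * hC) h1
  have hx0 : x0 = 0 := by
    have : x0 ^ 2 = 0 := by rw [hx1] at hA; linear_combination hA
    exact pow_eq_zero_iff (by norm_num)|>.mp this
  have hx2 : x2 = 0 := by
    have : w * x2 ^ 2 = 0 := by rw [hx0] at hB; linear_combination hB
    rcases mul_eq_zero.mp this with h' | h'
    · exact absurd h' hw0
    · exact pow_eq_zero_iff (by norm_num)|>.mp h'
  exact ⟨hx0, hx1, hx2⟩


open PadicInt

variable {p : ℕ} [Fact p.Prime]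

lemma toZMod_eq_zero_iff_norm_lt_one (z : ℤ_[p]) : toZMod z = 0 ↔ ‖z‖ < 1 := by
  have h1 : toZMod z = 0 ↔ z ∈ RingHom.ker (toZMod : ℤ_[p] →+* ZMod p) := by
    simp [RingHom.mem_ker]
  rw [h1, ker_toZMod, IsLocalRing.mem_maximalIdeal, mem_nonunits_iff, PadicInt.isUnit_iff]
  constructor
  · intro h; exact lt_of_le_of_ne (norm_le_one z) h
  · intro h; exact ne_of_lt h

lemma norm_three_eq_one (hp3 : p % 3 = 1) : ‖(3 : ℤ_[p])‖ = 1 := by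
  by_contra h
  have hle := norm_le_one (3 : ℤ_[p])
  have hlt : ‖(3 : ℤ_[p])‖ < 1 := lt_of_le_of_ne hle h
  rw [← toZMod_eq_zero_iff_norm_lt_one] at hlt
  rw [show ((3 : ℤ_[p])) = ((3 : ℕ) : ℤ_[p]) by norm_num, map_natCast] at hlt
  rw [ZMod.natCast_eq_zero_iff] at hlt
  have := (Nat.prime_dvd_prime_iff_eq Fact.out (by norm_num)).mp hlt
  omega

lemma exists_cube_root (hp3 : p % 3 = 1) (u : ℤ_[p]) (hu : ‖u‖ = 1)
    (x : ZMod p) (hx : x ^ 3 = toZMod u) : ∃ c : ℤ_[p], c ^ 3 = u := by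
  have hx0 : x ≠ 0 := by
    intro h
    rw [h] at hx
    have : toZMod u = 0 := by rw [← hx]; ring
    rw [toZMod_eq_zero_iff_norm_lt_one, hu] at this
    exact lt_irrefl _ this
  set a0 : ℤ_[p] := ((x.val : ℕ) : ℤ_[p]) with ha0
  have hta0 : toZMod a0 = x := by
    rw [ha0, map_natCast, ZMod.natCast_val, ZMod.cast_id]
  have ha0n : ‖a0‖ = 1 := by
    by_contra h
    have : ‖a0‖ < 1 := lt_of_le_of_ne (norm_le_one a0) h
    rw [← toZMod_eq_zero_iff_norm_lt_one, hta0] at this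
    exact hx0 this
  set F : Polynomial ℤ_[p] := Polynomial.X ^ 3 - Polynomial.C u with hF
  have hFeval : ∀ z : ℤ_[p], F.eval z = z ^ 3 - u := by intro z; simp [hF]
  have hFderiv : ∀ z : ℤ_[p], F.derivative.eval z = 3 * z ^ 2 := by
    intro z; simp [hF]; norm_num
  have hnorm : ‖F.eval a0‖ < ‖F.derivative.eval a0‖ ^ 2 := by
    rw [hFeval, hFderiv]
    have h1 : ‖(3 : ℤ_[p]) * a0 ^ 2‖ = 1 := by
      rw [norm_mul, norm_pow, ha0n, norm_three_eq_one hp3]; ring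
    rw [h1, one_pow, ← toZMod_eq_zero_iff_norm_lt_one]
    rw [map_sub, map_pow, hta0, hx, sub_self]
  obtain ⟨z, hz, -⟩ := hensels_lemma hnorm
  rw [Polynomial.coe_aeval_eq_eval, hFeval] at hz
  exact ⟨z, sub_eq_zero.mp hz⟩

lemma exists_zeta (hp3 : p % 3 = 1) : ∃ ζ : ℤ_[p], ζ ^ 2 + ζ + 1 = 0 := by
  -- get an element of order 3 in (ZMod p)ˣ
  obtain ⟨g, hg⟩ := IsCyclic.exists_ofOrder_eq_natCard (α := (ZMod p)ˣ)
  have hcard : Nat.card (ZMod p)ˣ = p - 1 := by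
    rw [Nat.card_eq_fintype_card, ZMod.card_units_eq_totient, Nat.totient_prime Fact.out]
  rw [hcard] at hg
  have hp2 : 2 ≤ p := (Fact.out : p.Prime).two_le
  have hdvd : 3 ∣ p - 1 := by omega
  set h := g ^ ((p - 1) / 3) with hh
  have hh3 : h ^ 3 = 1 := by
    rw [hh, ← pow_mul, mul_comm, Nat.mul_div_cancel' hdvd, ← hg, pow_orderOf_eq_one]
  have hh1 : h ≠ 1 := by
    intro h1
    have := orderOf_dvd_of_pow_eq_one (h1 ▸ rfl : g ^ ((p - 1) / 3) = 1)
    rw [hg] at this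
    have hlt : (p - 1) / 3 < p - 1 := Nat.div_lt_self (by omega) (by norm_num)
    have hpos : 0 < (p - 1) / 3 := by omega
    have := Nat.le_of_dvd hpos this
    omega
  set gg : ZMod p := (↑h : ZMod p) with hgg
  have hgg3 : gg ^ 3 = 1 := by
    rw [hgg, ← Units.val_pow_eq_pow_val, hh3, Units.val_one]
  have hgg1 : gg ≠ 1 := by
    intro h1
    exact hh1 (Units.ext h1)
  have hroot : gg ^ 2 + gg + 1 = 0 := by
    have hfac : (gg - 1) * (gg ^ 2 + gg + 1) = 0 := by linear_combination hgg3
    rcases mul_eq_zero.mp hfac with h' | h'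
    · exact absurd (sub_eq_zero.mp h') hgg1
    · exact h'
  -- Hensel lift
  set a0 : ℤ_[p] := ((gg.val : ℕ) : ℤ_[p]) with ha0
  have hta0 : toZMod a0 = gg := by rw [ha0, map_natCast, ZMod.natCast_val, ZMod.cast_id]
  set F : Polynomial ℤ_[p] := Polynomial.X ^ 2 + Polynomial.X + Polynomial.C 1 with hF
  have hFeval : ∀ z : ℤ_[p], F.eval z = z ^ 2 + z + 1 := by intro z; simp [hF]
  have hFderiv : ∀ z : ℤ_[p], F.derivative.eval z = 2 * z + 1 := by intro z; simp [hF]; norm_num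
  have hnorm : ‖F.eval a0‖ < ‖F.derivative.eval a0‖ ^ 2 := by
    rw [hFeval, hFderiv]
    have hd : toZMod (2 * a0 + 1) ≠ 0 := by
      have heq2 : toZMod (2 * a0 + 1) = 2 * gg + 1 := by
        rw [map_add, map_mul, map_one, map_ofNat, hta0]
      rw [heq2]
      intro hzero
      have : (2 * gg + 1) ^ 2 = -3 := by
        push_cast
        linear_combination 4 * hroot
      rw [hzero] at this
      have h3 : ((3 : ℕ) : ZMod p) = 0 := by push_cast; linear_combination this
      rw [ZMod.natCast_eq_zero_iff] at h3
      have := (Nat.prime_dvd_prime_iff_eq Fact.out (by norm_num)).mp h3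
      omega
    have hd1 : ‖2 * a0 + 1‖ = 1 := by
      by_contra hne
      exact hd ((toZMod_eq_zero_iff_norm_lt_one _).mpr
        (lt_of_le_of_ne (norm_le_one _) hne))
    rw [hd1, one_pow, ← toZMod_eq_zero_iff_norm_lt_one]
    rw [map_add, map_add, map_pow, map_one, hta0, hroot]
  obtain ⟨z, hz, -⟩ := hensels_lemma hnorm
  rw [Polynomial.coe_aeval_eq_eval, hFeval] at hz
  exact ⟨z, hz⟩


lemma scale3 (x0 x1 x2 : ℚ_[p]) (h : ¬(x0 = 0 ∧ x1 = 0 ∧ x2 = 0)) :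
    ∃ (m : ℤ) (z0 z1 z2 : ℤ_[p]), (z0 : ℚ_[p]) = (p : ℚ_[p]) ^ m * x0 ∧
      (z1 : ℚ_[p]) = (p : ℚ_[p]) ^ m * x1 ∧ (z2 : ℚ_[p]) = (p : ℚ_[p]) ^ m * x2 ∧
      (‖z0‖ = 1 ∨ ‖z1‖ = 1 ∨ ‖z2‖ = 1) := by
  obtain ⟨w, hwmem, hw0, hw1, hw2⟩ : ∃ w : ℚ_[p],
      (w = x0 ∨ w = x1 ∨ w = x2) ∧ ‖x0‖ ≤ ‖w‖ ∧ ‖x1‖ ≤ ‖w‖ ∧ ‖x2‖ ≤ ‖w‖ := by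
    rcases le_total ‖x0‖ ‖x1‖ with h01 | h01
    · rcases le_total ‖x1‖ ‖x2‖ with h12 | h12
      · exact ⟨x2, .inr (.inr rfl), by linarith, by linarith, le_rfl⟩
      · exact ⟨x1, .inr (.inl rfl), h01, le_rfl, h12⟩
    · rcases le_total ‖x0‖ ‖x2‖ with h02 | h02
      · exact ⟨x2, .inr (.inr rfl), h02, by linarith, le_rfl⟩
      · exact ⟨x0, .inl rfl, le_rfl, h01, h02⟩
  have hwne : w ≠ 0 := by
    intro h0
    rw [h0, norm_zero] at hw0 hw1 hw2
    exact h ⟨norm_le_zero_iff.mp hw0, norm_le_zero_iff.mp hw1, norm_le_zero_iff.mp hw2⟩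
  set m : ℤ := -w.valuation with hm
  have hcw : ‖(p : ℚ_[p]) ^ m * w‖ = 1 := by
    rw [_root_.norm_mul, Padic.norm_p_zpow, Padic.norm_eq_zpow_neg_valuation hwne,
      ← zpow_add₀ (by exact_mod_cast (Fact.out : p.Prime).pos.ne' : (p : ℝ) ≠ 0)]
    simp [hm]
  have hbound : ∀ y : ℚ_[p], ‖y‖ ≤ ‖w‖ → ‖(p : ℚ_[p]) ^ m * y‖ ≤ 1 := by
    intro y hy
    rw [_root_.norm_mul]
    calc ‖(p : ℚ_[p]) ^ m‖ * ‖y‖ ≤ ‖(p : ℚ_[p]) ^ m‖ * ‖w‖ :=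
          mul_le_mul_of_nonneg_left hy (norm_nonneg _)
      _ = 1 := by rw [← _root_.norm_mul]; exact hcw
  refine ⟨m, ⟨_, hbound x0 hw0⟩, ⟨_, hbound x1 hw1⟩, ⟨_, hbound x2 hw2⟩, rfl, rfl, rfl, ?_⟩
  rcases hwmem with h' | h' | h'
  · left; change ‖(p : ℚ_[p]) ^ m * x0‖ = 1; rw [h'] at hcw; exact hcw
  · right; left; change ‖(p : ℚ_[p]) ^ m * x1‖ = 1; rw [h'] at hcw; exact hcw
  · right; right; change ‖(p : ℚ_[p]) ^ m * x2‖ = 1; rw [h'] at hcw; exact hcw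

lemma no_norm_p_of_unit (hp3 : p % 3 = 1) (a : ℚ_[p]) (ha : ‖a‖ = 1)
    (hnc : ∀ c : ℚ_[p], c ^ 3 ≠ a) (v : ℤ_[p]ˣ) (x0 x1 x2 : ℚ_[p])
    (heq : x0 ^ 3 + a * x1 ^ 3 + a ^ 2 * x2 ^ 3 - 3 * a * (x0 * x1 * x2)
      = (p : ℚ_[p]) * ((v : ℤ_[p]) : ℚ_[p])) : False := by
  have hpR : (1 : ℝ) < (p : ℝ) := by exact_mod_cast (Fact.out : p.Prime).one_lt
  have hpR0 : (p : ℝ) ≠ 0 := by positivity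
  have hp0 : (p : ℚ_[p]) ≠ 0 := by
    exact_mod_cast (Nat.cast_ne_zero (R := ℚ_[p])).mpr (Fact.out : p.Prime).pos.ne'
  have hv0 : ((v : ℤ_[p]) : ℚ_[p]) ≠ 0 := by
    rw [PadicInt.coe_ne_zero]
    exact Units.ne_zero v
  have hne : ¬(x0 = 0 ∧ x1 = 0 ∧ x2 = 0) := by
    rintro ⟨rfl, rfl, rfl⟩
    rw [show (0:ℚ_[p]) ^ 3 + a * 0 ^ 3 + a ^ 2 * 0 ^ 3 - 3 * a * (0 * 0 * 0) = 0 by ring] at heq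
    exact mul_ne_zero hp0 hv0 heq.symm
  obtain ⟨m, z0, z1, z2, h0, h1, h2, hone⟩ := scale3 x0 x1 x2 hne
  set atil : ℤ_[p] := ⟨a, ha.le⟩ with hatil
  have hacoe : ((atil : ℤ_[p]) : ℚ_[p]) = a := rfl
  set F : ℤ_[p] := z0 ^ 3 + atil * z1 ^ 3 + atil ^ 2 * z2 ^ 3 - 3 * atil * (z0 * z1 * z2) with hFdef
  have hcube : ((p : ℚ_[p]) ^ m) ^ 3 = (p : ℚ_[p]) ^ (3 * m) := by
    rw [← zpow_natCast ((p : ℚ_[p]) ^ m) 3, ← zpow_mul]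
    norm_num [mul_comm]
  have hFcoe : ((F : ℤ_[p]) : ℚ_[p]) = (p : ℚ_[p]) ^ (3 * m) * ((p : ℚ_[p]) * ((v : ℤ_[p]) : ℚ_[p])) := by
    have h3c : ((3 : ℤ_[p]) : ℚ_[p]) = 3 := by exact_mod_cast rfl
    push_cast [hFdef, h3c]
    rw [h0, h1, h2, ← hcube]
    linear_combination ((p : ℚ_[p]) ^ m) ^ 3 * heq
  have hFnorm : ‖(F : ℤ_[p])‖ = (p : ℝ) ^ (-(3 * m) - 1) := by
    rw [PadicInt.norm_def, hFcoe, _root_.norm_mul, _root_.norm_mul,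
      Padic.norm_p_zpow, Padic.norm_p, ← PadicInt.norm_def, PadicInt.norm_units,
      mul_one, ← zpow_neg_one, ← zpow_add₀ hpR0]
    ring_nf
  have hFlt : ‖(F : ℤ_[p])‖ < 1 := by
    have hle : (p : ℝ) ^ (-(3 * m) - 1) ≤ 1 := hFnorm ▸ PadicInt.norm_le_one F
    have hexp : -(3 * m) - 1 ≤ 0 := by
      by_contra hgt
      push_neg at hgt
      have := (zpow_right_strictMono₀ hpR) (show (0:ℤ) < -(3*m) - 1 by omega)
      simp only [zpow_zero] at this
      linarith
    have hexp1 : -(3 * m) - 1 ≤ -1 := by omega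
    rw [hFnorm]
    calc (p : ℝ) ^ (-(3 * m) - 1) ≤ (p : ℝ) ^ (-1 : ℤ) :=
          (zpow_right_strictMono₀ hpR).monotone hexp1
      _ < (p : ℝ) ^ (0 : ℤ) := (zpow_right_strictMono₀ hpR) (by omega)
      _ = 1 := zpow_zero _
  have hFzero : toZMod F = 0 := (toZMod_eq_zero_iff_norm_lt_one F).mpr hFlt
  have hmod : (toZMod z0) ^ 3 + (toZMod atil) * (toZMod z1) ^ 3
      + (toZMod atil) ^ 2 * (toZMod z2) ^ 3
      - 3 * (toZMod atil) * ((toZMod z0) * (toZMod z1) * (toZMod z2)) = 0 := by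
    rw [← hFzero, hFdef]
    simp only [map_add, map_sub, map_mul, map_pow, map_ofNat]
  have hanc : ∀ x : ZMod p, x ^ 3 ≠ toZMod atil := by
    intro x hx
    have hat1 : ‖atil‖ = 1 := by rw [PadicInt.norm_def, hacoe, ha]
    obtain ⟨c, hc⟩ := exists_cube_root hp3 atil hat1 x hx
    apply hnc ((c : ℤ_[p]) : ℚ_[p])
    rw [← hacoe, ← hc]
    push_cast
    ring
  obtain ⟨e0, e1, e2⟩ := aniso (toZMod atil) (toZMod z0) (toZMod z1) (toZMod z2) hanc hmod
  rcases hone with h' | h' | h'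
  · rw [toZMod_eq_zero_iff_norm_lt_one] at e0; rw [h'] at e0; exact lt_irrefl _ e0
  · rw [toZMod_eq_zero_iff_norm_lt_one] at e1; rw [h'] at e1; exact lt_irrefl _ e1
  · rw [toZMod_eq_zero_iff_norm_lt_one] at e2; rw [h'] at e2; exact lt_irrefl _ e2


set_option maxHeartbeats 1600000 in
lemma unit_norm_form_cube (hp3 : p % 3 = 1) (a : ℚ_[p]) (r : ℤ) (hr : r = 1 ∨ r = 2)
    (ha : ‖a‖ = (p : ℝ) ^ (-r)) (u : ℤ_[p]ˣ) (x0 x1 x2 : ℚ_[p])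
    (heq : x0 ^ 3 + a * x1 ^ 3 + a ^ 2 * x2 ^ 3 - 3 * a * (x0 * x1 * x2)
      = ((u : ℤ_[p]) : ℚ_[p])) :
    ∃ x : ZMod p, x ^ 3 = toZMod (u : ℤ_[p]) := by
  have hpR : (1 : ℝ) < (p : ℝ) := by exact_mod_cast (Fact.out : p.Prime).one_lt
  have hpR0 : (p : ℝ) ≠ 0 := by positivity
  have hinj : Function.Injective (fun n : ℤ => (p : ℝ) ^ n) :=
    (zpow_right_strictMono₀ hpR).injective
  have hu1 : ‖((u : ℤ_[p]) : ℚ_[p])‖ = 1 := by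
    rw [← PadicInt.norm_def]; exact PadicInt.norm_units u
  have ha0 : a ≠ 0 := by
    intro h
    rw [h, norm_zero] at ha
    have : (0 : ℝ) < (p : ℝ) ^ (-r) := zpow_pos (by linarith) _
    linarith
  have h3Q : ‖(3 : ℚ_[p])‖ = 1 := by
    rw [show (3 : ℚ_[p]) = ((3 : ℤ_[p]) : ℚ_[p]) from by exact_mod_cast rfl,
      ← PadicInt.norm_def]
    exact norm_three_eq_one hp3
  -- exponent helpers
  have key : ∀ (x : ℚ_[p]) (s : ℤ), x ≠ 0 → (p : ℝ) ^ s * ‖x‖ ^ 3 = 1 → (3 : ℤ) ∣ s := by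
    intro x s hx h
    rw [Padic.norm_eq_zpow_neg_valuation hx, ← zpow_natCast ((p : ℝ) ^ (-x.valuation)) 3, ← zpow_mul,
      ← zpow_add₀ hpR0, ← zpow_zero (p : ℝ)] at h
    have := hinj h
    omega
  have key2 : ∀ (x y : ℚ_[p]) (s t : ℤ), x ≠ 0 → y ≠ 0 →
      (p : ℝ) ^ s * ‖x‖ ^ 3 = (p : ℝ) ^ t * ‖y‖ ^ 3 → (3 : ℤ) ∣ (s - t) := by
    intro x y s t hx hy h
    rw [Padic.norm_eq_zpow_neg_valuation hx, Padic.norm_eq_zpow_neg_valuation hy,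
      ← zpow_natCast ((p : ℝ) ^ (-x.valuation)) 3, ← zpow_natCast ((p : ℝ) ^ (-y.valuation)) 3,
      ← zpow_mul, ← zpow_mul, ← zpow_add₀ hpR0, ← zpow_add₀ hpR0] at h
    have := hinj h
    omega
  set T0 := x0 ^ 3 with hT0def
  set T1 := a * x1 ^ 3 with hT1def
  set T2 := a ^ 2 * x2 ^ 3 with hT2def
  set T3 := 3 * a * (x0 * x1 * x2) with hT3def
  have nT0 : ‖T0‖ = (p : ℝ) ^ (0 : ℤ) * ‖x0‖ ^ 3 := by
    rw [hT0def, _root_.norm_pow, zpow_zero, one_mul]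
  have nT1 : ‖T1‖ = (p : ℝ) ^ (-r) * ‖x1‖ ^ 3 := by
    rw [hT1def, _root_.norm_mul, _root_.norm_pow, ha]
  have nT2 : ‖T2‖ = (p : ℝ) ^ (-(2 * r)) * ‖x2‖ ^ 3 := by
    rw [hT2def, _root_.norm_mul, _root_.norm_pow, _root_.norm_pow, ha,
      ← zpow_natCast ((p : ℝ) ^ (-r)) 2, ← zpow_mul]
    norm_num [mul_comm]
  have nT3 : ‖T3‖ ^ 3 = ‖T0‖ * (‖T1‖ * ‖T2‖) := by
    rw [hT3def, _root_.norm_mul, _root_.norm_mul, _root_.norm_mul, _root_.norm_mul, h3Q,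
      nT0, nT1, nT2, ha, zpow_zero,
      (by rw [← zpow_natCast ((p : ℝ) ^ (-r)) 2, ← zpow_mul]; norm_num [mul_comm] :
        (p:ℝ) ^ (-(2*r)) = ((p:ℝ)^(-r))^2)]
    ring
  -- the big case analysis: x0 is a unit and the other terms are small
  have main : ‖x0‖ = 1 ∧ ‖T1‖ < 1 ∧ ‖T2‖ < 1 ∧ ‖T3‖ < 1 := by
    have hT1R : ‖T1‖ ≤ max ‖T1‖ (max ‖T2‖ ‖T3‖) := le_max_left _ _
    have hT2R : ‖T2‖ ≤ max ‖T1‖ (max ‖T2‖ ‖T3‖) :=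
      le_trans (le_max_left _ _) (le_max_right _ _)
    have hT3R : ‖T3‖ ≤ max ‖T1‖ (max ‖T2‖ ‖T3‖) :=
      le_trans (le_max_right _ _) (le_max_right _ _)
    have hrest : ‖T1 + T2 - T3‖ ≤ max ‖T1‖ (max ‖T2‖ ‖T3‖) := by
      calc ‖T1 + T2 - T3‖ ≤ max ‖T1 + T2‖ ‖T3‖ := by
            rw [sub_eq_add_neg]
            refine le_trans (Padic.nonarchimedean _ _) ?_
            rw [norm_neg]
        _ ≤ max (max ‖T1‖ ‖T2‖) ‖T3‖ :=
            max_le_max (Padic.nonarchimedean _ _) le_rfl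
        _ ≤ max ‖T1‖ (max ‖T2‖ ‖T3‖) := max_le (max_le hT1R hT2R) hT3R
    rcases lt_or_ge (max ‖T1‖ (max ‖T2‖ ‖T3‖)) ‖T0‖ with hcmp | hcmp
    · -- T0 dominates
      have hTu : ((u : ℤ_[p]) : ℚ_[p]) = T0 + (T1 + T2 - T3) := by rw [← heq]; ring
      have hlt : ‖T1 + T2 - T3‖ < ‖T0‖ := lt_of_le_of_lt hrest hcmp
      have hnu : ‖((u : ℤ_[p]) : ℚ_[p])‖ = ‖T0‖ := by
        rw [hTu, Padic.add_eq_max_of_ne (ne_of_gt hlt), max_eq_left (le_of_lt hlt)]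
      rw [hu1] at hnu
      have hx0n : ‖x0‖ = 1 := by
        have h3 : ‖x0‖ ^ 3 = 1 := by
          have := nT0.symm.trans hnu.symm
          rw [zpow_zero, one_mul] at this
          exact this
        have hfac : (‖x0‖ - 1) * (‖x0‖ ^ 2 + ‖x0‖ + 1) = 0 := by linear_combination h3
        have hpos : (0:ℝ) < ‖x0‖ ^ 2 + ‖x0‖ + 1 := by nlinarith [norm_nonneg x0, sq_nonneg ‖x0‖]
        have := mul_eq_zero.mp hfac
        rcases this with h' | h'
        · linarith [sub_eq_zero.mp h']
        · linarith
      have h01 : ‖T0‖ = 1 := hnu.symm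
      exact ⟨hx0n, lt_of_le_of_lt hT1R (h01 ▸ hcmp), lt_of_le_of_lt hT2R (h01 ▸ hcmp),
        lt_of_le_of_lt hT3R (h01 ▸ hcmp)⟩
    · -- contradiction branch
      exfalso
      have hub : (1 : ℝ) ≤ max ‖T1‖ (max ‖T2‖ ‖T3‖) := by
        have h1 : ((u : ℤ_[p]) : ℚ_[p]) = T0 + (T1 + T2 - T3) := by rw [← heq]; ring
        have h2 : ‖((u : ℤ_[p]) : ℚ_[p])‖ ≤ max ‖T0‖ ‖T1 + T2 - T3‖ := by
          rw [h1]; exact Padic.nonarchimedean _ _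
        rw [hu1] at h2
        exact le_trans h2 (max_le hcmp hrest)
      rcases max_choice ‖T1‖ (max ‖T2‖ ‖T3‖) with hRc | hRc
      · -- R = ‖T1‖
        rw [hRc] at hub hcmp hT2R hT3R
        have hT1pos : (0:ℝ) < ‖T1‖ := lt_of_lt_of_le one_pos hub
        have hT1ne : T1 ≠ 0 := by intro h; rw [h, norm_zero] at hT1pos; linarith
        have hx1ne : x1 ≠ 0 := by
          intro h; apply hT1ne; rw [hT1def, h]; ring
        have hT0lt : ‖T0‖ < ‖T1‖ := by
          rcases eq_or_lt_of_le hcmp with hEq | hlt'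
          · exfalso
            have hT0ne : T0 ≠ 0 := by
              intro h; rw [h, norm_zero] at hEq; linarith
            have hx0ne : x0 ≠ 0 := by
              intro h; apply hT0ne; rw [hT0def, h]; ring
            have := key2 x0 x1 0 (-r) hx0ne hx1ne (by rw [← nT0, ← nT1, hEq])
            omega
          · exact hlt'
        have hT2lt : ‖T2‖ < ‖T1‖ := by
          rcases eq_or_lt_of_le hT2R with hEq | hlt'
          · exfalso
            have hT2ne : T2 ≠ 0 := by
              intro h; rw [h, norm_zero] at hEq; linarith
            have hx2ne : x2 ≠ 0 := by
              intro h; apply hT2ne; rw [hT2def, h]; ring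
            have := key2 x2 x1 (-(2*r)) (-r) hx2ne hx1ne (by rw [← nT2, ← nT1, hEq])
            omega
          · exact hlt'
        have hT3lt : ‖T3‖ < ‖T1‖ := by
          have hc : ‖T3‖ ^ 3 < ‖T1‖ ^ 3 := by
            rw [nT3]
            nlinarith [mul_nonneg (mul_nonneg (norm_nonneg T0) (norm_nonneg T1))
                (sub_nonneg.mpr hT2lt.le),
              mul_pos (sub_pos.mpr hT0lt) (mul_pos hT1pos hT1pos)]
          by_contra hge
          push_neg at hge
          have := pow_le_pow_left₀ (norm_nonneg T1) hge 3
          linarith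
        have hnu : ‖((u : ℤ_[p]) : ℚ_[p])‖ = ‖T1‖ := by
          have h1 : ((u : ℤ_[p]) : ℚ_[p]) = T1 + (T0 + T2 - T3) := by rw [← heq]; ring
          have h2 : ‖T0 + T2 - T3‖ < ‖T1‖ := by
            calc ‖T0 + T2 - T3‖ ≤ max (max ‖T0‖ ‖T2‖) ‖T3‖ := by
                  rw [sub_eq_add_neg]
                  refine le_trans (Padic.nonarchimedean _ _) ?_
                  rw [norm_neg]
                  exact max_le_max (Padic.nonarchimedean _ _) le_rfl
              _ < ‖T1‖ := by
                  rw [max_lt_iff, max_lt_iff]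
                  exact ⟨⟨hT0lt, hT2lt⟩, hT3lt⟩
          rw [h1, Padic.add_eq_max_of_ne (ne_of_gt h2), max_eq_left (le_of_lt h2)]
        rw [hu1] at hnu
        have := key x1 (-r) hx1ne (by rw [← nT1, ← hnu])
        omega
      · rw [hRc] at hub hcmp hT1R
        rcases max_choice ‖T2‖ ‖T3‖ with hRc2 | hRc2
        · -- R = ‖T2‖
          rw [hRc2] at hub hcmp hT1R
          have hT1top : ‖T1‖ ≤ ‖T2‖ := hT1R
          have hT3top : ‖T3‖ ≤ ‖T2‖ := hRc2 ▸ le_max_right _ _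
          have hT2pos : (0:ℝ) < ‖T2‖ := lt_of_lt_of_le one_pos hub
          have hT2ne : T2 ≠ 0 := by intro h; rw [h, norm_zero] at hT2pos; linarith
          have hx2ne : x2 ≠ 0 := by
            intro h; apply hT2ne; rw [hT2def, h]; ring
          have hT0lt : ‖T0‖ < ‖T2‖ := by
            rcases eq_or_lt_of_le hcmp with hEq | hlt'
            · exfalso
              have hT0ne : T0 ≠ 0 := by intro h; rw [h, norm_zero] at hEq; linarith
              have hx0ne : x0 ≠ 0 := by intro h; apply hT0ne; rw [hT0def, h]; ring
              have := key2 x0 x2 0 (-(2*r)) hx0ne hx2ne (by rw [← nT0, ← nT2, hEq])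
              omega
            · exact hlt'
          have hT1lt : ‖T1‖ < ‖T2‖ := by
            rcases eq_or_lt_of_le hT1top with hEq | hlt'
            · exfalso
              have hT1ne : T1 ≠ 0 := by intro h; rw [h, norm_zero] at hEq; linarith
              have hx1ne : x1 ≠ 0 := by intro h; apply hT1ne; rw [hT1def, h]; ring
              have := key2 x1 x2 (-r) (-(2*r)) hx1ne hx2ne (by rw [← nT1, ← nT2, hEq])
              omega
            · exact hlt'
          have hT3lt : ‖T3‖ < ‖T2‖ := by
            have hc : ‖T3‖ ^ 3 < ‖T2‖ ^ 3 := by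
              rw [nT3]
              nlinarith [mul_nonneg (mul_nonneg (norm_nonneg T0) (norm_nonneg T2))
                  (sub_nonneg.mpr hT1lt.le),
                mul_pos (sub_pos.mpr hT0lt) (mul_pos hT2pos hT2pos)]
            by_contra hge
            push_neg at hge
            have := pow_le_pow_left₀ (norm_nonneg T2) hge 3
            linarith
          have hnu : ‖((u : ℤ_[p]) : ℚ_[p])‖ = ‖T2‖ := by
            have h1 : ((u : ℤ_[p]) : ℚ_[p]) = T2 + (T0 + T1 - T3) := by rw [← heq]; ring
            have h2 : ‖T0 + T1 - T3‖ < ‖T2‖ := by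
              calc ‖T0 + T1 - T3‖ ≤ max (max ‖T0‖ ‖T1‖) ‖T3‖ := by
                    rw [sub_eq_add_neg]
                    refine le_trans (Padic.nonarchimedean _ _) ?_
                    rw [norm_neg]
                    exact max_le_max (Padic.nonarchimedean _ _) le_rfl
                _ < ‖T2‖ := by
                    rw [max_lt_iff, max_lt_iff]
                    exact ⟨⟨hT0lt, hT1lt⟩, hT3lt⟩
            rw [h1, Padic.add_eq_max_of_ne (ne_of_gt h2), max_eq_left (le_of_lt h2)]
          rw [hu1] at hnu
          have := key x2 (-(2*r)) hx2ne (by rw [← nT2, ← hnu])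
          omega
        · -- R = ‖T3‖
          rw [hRc2] at hub hcmp hT1R
          have hT2top : ‖T2‖ ≤ ‖T3‖ := hRc2 ▸ le_max_left _ _
          have hT3pos : (0:ℝ) < ‖T3‖ := lt_of_lt_of_le one_pos hub
          have h0e : ‖T0‖ = ‖T3‖ := by
            rcases eq_or_lt_of_le hcmp with hEq | hlt'
            · exact hEq
            · exfalso
              nlinarith [nT3,
                mul_le_mul_of_nonneg_left
                  (mul_le_mul hT1R hT2top (norm_nonneg T2) (norm_nonneg T3)) (norm_nonneg T0),
                mul_lt_mul_of_pos_right hlt' (mul_pos hT3pos hT3pos)]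
          have h1e : ‖T1‖ = ‖T3‖ := by
            rcases eq_or_lt_of_le hT1R with hEq | hlt'
            · exact hEq
            · exfalso
              have hh1 : ‖T1‖ * ‖T2‖ ≤ ‖T1‖ * ‖T3‖ :=
                mul_le_mul_of_nonneg_left hT2top (norm_nonneg T1)
              have hh2 : ‖T1‖ * ‖T3‖ < ‖T3‖ * ‖T3‖ := mul_lt_mul_of_pos_right hlt' hT3pos
              have hh3 : ‖T0‖ * (‖T1‖ * ‖T2‖) ≤ ‖T3‖ * (‖T1‖ * ‖T2‖) :=
                mul_le_mul_of_nonneg_right hcmp (mul_nonneg (norm_nonneg T1) (norm_nonneg T2))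
              have hh4 : ‖T3‖ * (‖T1‖ * ‖T2‖) ≤ ‖T3‖ * (‖T1‖ * ‖T3‖) :=
                mul_le_mul_of_nonneg_left hh1 (norm_nonneg T3)
              have hh5 : ‖T3‖ * (‖T1‖ * ‖T3‖) < ‖T3‖ * (‖T3‖ * ‖T3‖) :=
                mul_lt_mul_of_pos_left hh2 hT3pos
              nlinarith [nT3]
          have hT0ne : T0 ≠ 0 := by
            intro h; rw [h, norm_zero] at h0e; rw [← h0e] at hT3pos; linarith
          have hT1ne : T1 ≠ 0 := by
            intro h; rw [h, norm_zero] at h1e; rw [← h1e] at hT3pos; linarith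
          have hx0ne : x0 ≠ 0 := by intro h; apply hT0ne; rw [hT0def, h]; ring
          have hx1ne : x1 ≠ 0 := by intro h; apply hT1ne; rw [hT1def, h]; ring
          have := key2 x0 x1 0 (-r) hx0ne hx1ne (by rw [← nT0, ← nT1, h0e, h1e])
          omega
  -- conclusion
  obtain ⟨hx0n, hT1lt, hT2lt, hT3lt⟩ := main
  set x0t : ℤ_[p] := ⟨x0, hx0n.le⟩ with hx0t
  have hDcoe : (((u : ℤ_[p]) - x0t ^ 3 : ℤ_[p]) : ℚ_[p]) = T1 + T2 - T3 := by
    push_cast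
    rw [← heq, hT0def]
    ring
  have hDlt : ‖(u : ℤ_[p]) - x0t ^ 3‖ < 1 := by
    rw [PadicInt.norm_def, hDcoe]
    calc ‖T1 + T2 - T3‖ ≤ max (max ‖T1‖ ‖T2‖) ‖T3‖ := by
          rw [sub_eq_add_neg]
          refine le_trans (Padic.nonarchimedean _ _) ?_
          rw [norm_neg]
          exact max_le_max (Padic.nonarchimedean _ _) le_rfl
      _ < 1 := by rw [max_lt_iff, max_lt_iff]; exact ⟨⟨hT1lt, hT2lt⟩, hT3lt⟩
  have hzero := (toZMod_eq_zero_iff_norm_lt_one _).mpr hDlt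
  rw [map_sub, map_pow, sub_eq_zero] at hzero
  exact ⟨toZMod x0t, hzero.symm⟩


set_option maxHeartbeats 1600000 in
/-- Let `K/ℚ_p` be a totally ramified abelian cubic extension, where `p ≡ 1 (mod 3)`.
(Total ramification is expressed by the existence of an element of `K` whose norm is
`p` times a unit of `ℤ_p`.)  A `p`-adic unit `u` is a norm from `K^*` if and only if
its reduction mod `p` is a cube in `F_p^*`. -/
theorem unit_norm_totally_ramified_iff (p : ℕ) [Fact p.Prime] (hp3 : p % 3 = 1)
    (K : Type*) [Field K] [Algebra ℚ_[p] K] [FiniteDimensional ℚ_[p] K]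
    [IsGalois ℚ_[p] K] (hrank : Module.finrank ℚ_[p] K = 3)
    (habelian : ∀ σ τ : K ≃ₐ[ℚ_[p]] K, σ * τ = τ * σ)
    (htr : ∃ π : K, ∃ v : ℤ_[p]ˣ,
      Algebra.norm ℚ_[p] π = (p : ℚ_[p]) * ((v : ℤ_[p]) : ℚ_[p]))
    (u : ℤ_[p]ˣ) :
    (∃ y : K, Algebra.norm ℚ_[p] y = (((u : ℤ_[p]) : ℚ_[p]))) ↔
      ∃ x : ZMod p, x ^ 3 = PadicInt.toZMod (u : ℤ_[p]) := by
  have hpR : (1 : ℝ) < (p : ℝ) := by exact_mod_cast (Fact.out : p.Prime).one_lt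
  have hpR0 : (p : ℝ) ≠ 0 := by positivity
  have hp0 : (p : ℚ_[p]) ≠ 0 :=
    (Nat.cast_ne_zero (R := ℚ_[p])).mpr (Fact.out : p.Prime).pos.ne'
  constructor
  · rintro ⟨y, hy⟩
    -- construct a primitive cube root of unity in ℚ_[p]
    obtain ⟨ζ0, hζ0⟩ := exists_zeta (p := p) hp3
    set ζ : ℚ_[p] := (ζ0 : ℚ_[p]) with hζdef
    have hzQ : ζ ^ 2 + ζ + 1 = 0 := by
      have := congrArg (fun z : ℤ_[p] => (z : ℚ_[p])) hζ0
      push_cast at this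
      exact this
    have hζne1 : ζ ≠ 1 := by
      intro h
      rw [h] at hzQ
      norm_num at hzQ
    have hζ3 : ζ ^ 3 = 1 := by linear_combination (ζ - 1) * hzQ
    have hprim : IsPrimitiveRoot ζ 3 := by
      have horder : orderOf ζ ∣ 3 := orderOf_dvd_of_pow_eq_one hζ3
      have hne : orderOf ζ ≠ 1 := by
        intro h
        exact hζne1 (orderOf_eq_one_iff.mp h)
      have : orderOf ζ = 3 := by
        rcases (Nat.prime_three).eq_one_or_self_of_dvd _ horder with h | h
        · exact absurd h hne
        · exact h
      exact this ▸ IsPrimitiveRoot.orderOf ζ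
    have hKprim : (primitiveRoots (Module.finrank ℚ_[p] K) ℚ_[p]).Nonempty := by
      rw [hrank]
      exact ⟨ζ, (mem_primitiveRoots (by norm_num)).mpr hprim⟩
    haveI : Fact (Nat.Prime 3) := ⟨by norm_num⟩
    haveI : IsCyclic (K ≃ₐ[ℚ_[p]] K) :=
      isCyclic_of_prime_card (by
        rw [IsGalois.card_aut_eq_finrank, hrank])
    obtain ⟨α, hαmem, hαtop⟩ := exists_root_adjoin_eq_top_of_isCyclic ℚ_[p] K hKprim
    obtain ⟨a₀, ha₀⟩ := hαmem
    rw [hrank] at ha₀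
    have hbotne : (⊥ : IntermediateField ℚ_[p] K) ≠ ⊤ := by
      intro h
      have h13 : (1 : ℕ) = 3 := by
        rw [← IntermediateField.finrank_bot (F := ℚ_[p]) (E := K), h,
          IntermediateField.finrank_top', hrank]
      norm_num at h13
    have ha₀ne : a₀ ≠ 0 := by
      intro h
      rw [h, map_zero] at ha₀
      have hα0 : α = 0 := pow_eq_zero_iff (n := 3) (by norm_num) |>.mp ha₀.symm
      rw [hα0, IntermediateField.adjoin_zero] at hαtop
      exact hbotne hαtop
    set k : ℤ := a₀.valuation with hk
    set q : ℤ := k / 3 with hq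
    set r : ℤ := k % 3 with hrdef
    have hkqr : 3 * q + r = k := Int.mul_ediv_add_emod k 3
    have hrlow : 0 ≤ r := Int.emod_nonneg k (by norm_num)
    have hrhigh : r < 3 := Int.emod_lt_of_pos k (by norm_num)
    set a' : ℚ_[p] := (p : ℚ_[p]) ^ (-(3 * q)) * a₀ with ha'def
    set θ : K := algebraMap ℚ_[p] K ((p : ℚ_[p]) ^ (-q)) * α with hθdef
    have hcubeq : ((p : ℚ_[p]) ^ (-q)) ^ 3 = (p : ℚ_[p]) ^ (-(3 * q)) := by
      rw [← zpow_natCast ((p : ℚ_[p]) ^ (-q)) 3, ← zpow_mul]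
      norm_num [mul_comm]
    have hθ3 : θ ^ 3 = algebraMap ℚ_[p] K a' := by
      rw [hθdef, mul_pow, ← map_pow, hcubeq, ← ha₀, ha'def, map_mul]
    have hθtop : ℚ_[p]⟮θ⟯ = ⊤ := by
      rw [eq_top_iff, ← hαtop]
      rw [IntermediateField.adjoin_simple_le_iff]
      have hαrw : α = algebraMap ℚ_[p] K ((p : ℚ_[p]) ^ q) * θ := by
        rw [hθdef, ← mul_assoc, ← map_mul, ← zpow_add₀ hp0]
        norm_num
      rw [hαrw]
      exact mul_mem (IntermediateField.algebraMap_mem _ _)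
        (IntermediateField.mem_adjoin_simple_self _ _)
    have hna' : ‖a'‖ = (p : ℝ) ^ (-r) := by
      rw [ha'def, _root_.norm_mul, Padic.norm_p_zpow, Padic.norm_eq_zpow_neg_valuation ha₀ne, ← hk,
        ← zpow_add₀ hpR0]
      congr 1
      omega
    have ha'ne : a' ≠ 0 := by
      intro h
      rw [h, norm_zero] at hna'
      have : (0:ℝ) < (p : ℝ) ^ (-r) := zpow_pos (by linarith) _
      linarith
    -- `a'` is not a cube in ℚ_[p]
    set z : K := algebraMap ℚ_[p] K ζ with hzdef
    have hzK : z ^ 2 + z + 1 = 0 := by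
      have h' := congrArg (algebraMap ℚ_[p] K) hzQ
      simpa [map_add, map_pow, map_one, map_zero] using h'
    have hθne : θ ≠ 0 := by
      intro h
      rw [h] at hθ3
      apply ha'ne
      have h0 : algebraMap ℚ_[p] K a' = 0 := by rw [← hθ3]; ring
      exact (_root_.map_eq_zero (algebraMap ℚ_[p] K)).mp h0
    have hζ0 : ζ ≠ 0 := by
      intro h
      rw [h] at hzQ
      norm_num at hzQ
    have hζ2ne1 : ζ ^ 2 ≠ 1 := by
      intro h
      apply hζne1
      linear_combination hζ3 - ζ * h
    have hζneζ2 : ζ ≠ ζ ^ 2 := by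
      intro h
      apply hζ2ne1
      linear_combination hζ3 + ζ * h
    have hinjK : Function.Injective (algebraMap ℚ_[p] K) := (algebraMap ℚ_[p] K).injective
    have hz1 : z ≠ 1 := by
      intro h
      apply hζne1
      apply hinjK
      rw [map_one]
      exact h
    have hz21 : z ^ 2 ≠ 1 := by
      intro h
      apply hζ2ne1
      apply hinjK
      rw [map_pow, map_one]
      exact h
    have hzz2 : z ≠ z ^ 2 := by
      intro h
      apply hζneζ2
      apply hinjK
      rw [map_pow]
      exact h
    have hnc : ∀ c : ℚ_[p], c ^ 3 ≠ a' := by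
      intro c hc
      have hfact : (θ - algebraMap ℚ_[p] K c) * (θ - z * algebraMap ℚ_[p] K c) *
          (θ - z ^ 2 * algebraMap ℚ_[p] K c) = 0 := by
        rw [cube_factor_identity z θ (algebraMap ℚ_[p] K c) hzK, hθ3, ← map_pow, hc, sub_self]
      have hθbot : θ ∈ (⊥ : IntermediateField ℚ_[p] K) := by
        rw [IntermediateField.mem_bot]
        rcases mul_eq_zero.mp hfact with h' | h'
        · rcases mul_eq_zero.mp h' with h'' | h''
          · exact ⟨c, (sub_eq_zero.mp h'').symm⟩
          · refine ⟨ζ * c, ?_⟩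
            rw [map_mul, ← hzdef]
            exact (sub_eq_zero.mp h'').symm
        · refine ⟨ζ ^ 2 * c, ?_⟩
          rw [map_mul, map_pow, ← hzdef]
          exact (sub_eq_zero.mp h').symm
      have hbt : ℚ_[p]⟮θ⟯ = ⊥ := IntermediateField.adjoin_simple_eq_bot_iff.mpr hθbot
      rw [hθtop] at hbt
      exact hbotne hbt.symm
    -- norm formula for arbitrary elements of K
    have hnorm : ∀ w : K, ∃ c0 c1 c2 : ℚ_[p], Algebra.norm ℚ_[p] w
        = c0 ^ 3 + a' * c1 ^ 3 + a' ^ 2 * c2 ^ 3 - 3 * a' * (c0 * c1 * c2) := by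
      classical
      have hint : IsIntegral ℚ_[p] θ := IsIntegral.of_finite _ _
      have hadj : Algebra.adjoin ℚ_[p] ({θ} : Set K) = ⊤ := by
        have h1 := IntermediateField.adjoin_simple_toSubalgebra_of_isAlgebraic hint.isAlgebraic
        rw [hθtop, IntermediateField.top_toSubalgebra] at h1
        exact h1.symm
      have hclass : ∀ σ : K ≃ₐ[ℚ_[p]] K, σ θ = θ ∨ σ θ = z * θ ∨ σ θ = z ^ 2 * θ := by
        intro σ
        have h3 : (σ θ) ^ 3 = θ ^ 3 := by rw [← map_pow, hθ3, AlgEquiv.commutes, ← hθ3]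
        have hfact : (σ θ - θ) * (σ θ - z * θ) * (σ θ - z ^ 2 * θ) = 0 := by
          rw [cube_factor_identity z (σ θ) θ hzK, h3, sub_self]
        rcases mul_eq_zero.mp hfact with h' | h'
        · rcases mul_eq_zero.mp h' with h'' | h''
          · exact Or.inl (sub_eq_zero.mp h'')
          · exact Or.inr (Or.inl (sub_eq_zero.mp h''))
        · exact Or.inr (Or.inr (sub_eq_zero.mp h'))
      have hGinj : Function.Injective (fun σ : K ≃ₐ[ℚ_[p]] K => σ θ) := by
        intro σ τ h
        simp only at h
        apply AlgEquiv.ext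
        intro v
        have hv : v ∈ Algebra.adjoin ℚ_[p] ({θ} : Set K) := by rw [hadj]; exact Algebra.mem_top
        rw [Algebra.adjoin_singleton_eq_range_aeval, AlgHom.mem_range] at hv
        obtain ⟨gv, hgv⟩ := hv
        calc σ v = σ (Polynomial.aeval θ gv) := by rw [hgv]
          _ = Polynomial.aeval (σ θ) gv := (Polynomial.aeval_algHom_apply σ.toAlgHom θ gv).symm
          _ = Polynomial.aeval (τ θ) gv := by rw [h]
          _ = τ (Polynomial.aeval θ gv) := Polynomial.aeval_algHom_apply τ.toAlgHom θ gv
          _ = τ v := by rw [hgv]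
      set S : Finset K := {θ, z * θ, z ^ 2 * θ} with hS
      have hne1 : θ ≠ z * θ := by
        intro h
        apply hz1
        exact (mul_right_cancel₀ hθne (by rw [← h, one_mul])).symm
      have hne2 : θ ≠ z ^ 2 * θ := by
        intro h
        apply hz21
        exact (mul_right_cancel₀ hθne (by rw [← h, one_mul])).symm
      have hne3 : z * θ ≠ z ^ 2 * θ := by
        intro h
        exact hzz2 (mul_right_cancel₀ hθne h)
      have hScard : S.card = 3 := by
        rw [hS, Finset.card_insert_of_notMem, Finset.card_insert_of_notMem,
          Finset.card_singleton]
        · simp only [Finset.mem_singleton]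
          exact hne3
        · simp only [Finset.mem_insert, Finset.mem_singleton]
          push_neg
          exact ⟨hne1, hne2⟩
      have himg : Finset.univ.image (fun σ : K ≃ₐ[ℚ_[p]] K => σ θ) = S := by
        apply Finset.eq_of_subset_of_card_le
        · intro t ht
          simp only [Finset.mem_image] at ht
          obtain ⟨σ, -, rfl⟩ := ht
          rcases hclass σ with h | h | h <;> simp [hS, h]
        · rw [Finset.card_image_of_injective _ hGinj, Finset.card_univ,
            ← Nat.card_eq_fintype_card, IsGalois.card_aut_eq_finrank, hrank, hScard]
      intro w
      have hw : w ∈ Algebra.adjoin ℚ_[p] ({θ} : Set K) := by rw [hadj]; exact Algebra.mem_top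
      rw [Algebra.adjoin_singleton_eq_range_aeval, AlgHom.mem_range] at hw
      obtain ⟨g, hg⟩ := hw
      set f : Polynomial ℚ_[p] := Polynomial.X ^ 3 - Polynomial.C a' with hf
      have hfmonic : f.Monic := Polynomial.monic_X_pow_sub_C a' (by norm_num)
      set g' := g %ₘ f with hg'def
      have hdeg : g'.natDegree < 3 := by
        rcases eq_or_ne g' 0 with h0 | h0
        · rw [h0]; simp
        · have h1 : g'.degree < f.degree := Polynomial.degree_modByMonic_lt g hfmonic
          have h2 : f.degree = 3 := by
            rw [hf]; exact Polynomial.degree_X_pow_sub_C (by norm_num) a'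
          rw [h2] at h1
          exact (Polynomial.natDegree_lt_iff_degree_lt h0).mpr h1
      have hfθ : Polynomial.aeval θ f = 0 := by
        rw [hf, map_sub, map_pow, Polynomial.aeval_X, Polynomial.aeval_C, hθ3, sub_self]
      have haeval : Polynomial.aeval θ g' = w := by
        have hsplit := Polynomial.modByMonic_add_div g f
        rw [← hg, ← hsplit, map_add, map_mul, hfθ, zero_mul, add_zero, hg'def]
      set c0 := g'.coeff 0 with hc0
      set c1 := g'.coeff 1 with hc1
      set c2 := g'.coeff 2 with hc2
      have hwrep : w = algebraMap ℚ_[p] K c0 + algebraMap ℚ_[p] K c1 * θ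
          + algebraMap ℚ_[p] K c2 * θ ^ 2 := by
        rw [← haeval, Polynomial.aeval_eq_sum_range' hdeg]
        rw [Finset.sum_range_succ, Finset.sum_range_succ, Finset.sum_range_one]
        simp only [pow_zero, pow_one, Algebra.smul_def, mul_one]
        rfl
      have hσw : ∀ σ : K ≃ₐ[ℚ_[p]] K, σ w = algebraMap ℚ_[p] K c0
          + algebraMap ℚ_[p] K c1 * (σ θ) + algebraMap ℚ_[p] K c2 * (σ θ) ^ 2 := by
        intro σ
        rw [hwrep]
        simp only [map_add, map_mul, map_pow, AlgEquiv.commutes]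
      refine ⟨c0, c1, c2, hinjK ?_⟩
      rw [Algebra.norm_eq_prod_automorphisms]
      calc ∏ σ : K ≃ₐ[ℚ_[p]] K, σ w
          = ∏ σ : K ≃ₐ[ℚ_[p]] K, (algebraMap ℚ_[p] K c0
            + algebraMap ℚ_[p] K c1 * (σ θ) + algebraMap ℚ_[p] K c2 * (σ θ) ^ 2) :=
            Finset.prod_congr rfl (fun σ _ => hσw σ)
        _ = ∏ t ∈ S, (algebraMap ℚ_[p] K c0 + algebraMap ℚ_[p] K c1 * t
            + algebraMap ℚ_[p] K c2 * t ^ 2) := by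
            rw [← himg, Finset.prod_image (fun σ _ τ _ h => hGinj h)]
        _ = (algebraMap ℚ_[p] K c0 + algebraMap ℚ_[p] K c1 * θ + algebraMap ℚ_[p] K c2 * θ ^ 2)
            * (algebraMap ℚ_[p] K c0 + algebraMap ℚ_[p] K c1 * (z * θ)
              + algebraMap ℚ_[p] K c2 * (z * θ) ^ 2)
            * (algebraMap ℚ_[p] K c0 + algebraMap ℚ_[p] K c1 * (z ^ 2 * θ)
              + algebraMap ℚ_[p] K c2 * (z ^ 2 * θ) ^ 2) := by
            rw [hS, Finset.prod_insert (by
                simp only [Finset.mem_insert, Finset.mem_singleton]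
                push_neg
                exact ⟨hne1, hne2⟩),
              Finset.prod_insert (by
                simp only [Finset.mem_singleton]
                exact hne3),
              Finset.prod_singleton]
            ring
        _ = algebraMap ℚ_[p] K (c0 ^ 3 + a' * c1 ^ 3 + a' ^ 2 * c2 ^ 3 - 3 * a' * (c0 * c1 * c2))
            := by
            rw [cube_prod_identity z θ (algebraMap ℚ_[p] K a')
              (algebraMap ℚ_[p] K c0) (algebraMap ℚ_[p] K c1) (algebraMap ℚ_[p] K c2) hzK hθ3]
            simp only [map_add, map_sub, map_mul, map_pow, map_ofNat]
    -- use the norm formula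
    rcases (by omega : r = 0 ∨ r = 1 ∨ r = 2) with hr | hr
    · exfalso
      obtain ⟨π, v, hπ⟩ := htr
      obtain ⟨d0, d1, d2, hd⟩ := hnorm π
      refine no_norm_p_of_unit hp3 a' ?_ hnc v d0 d1 d2 (by rw [← hd, hπ])
      rw [hna', hr]
      norm_num
    · obtain ⟨c0, c1, c2, hc⟩ := hnorm y
      exact unit_norm_form_cube hp3 a' r hr hna' u c0 c1 c2 (by rw [← hc, hy])
  · rintro ⟨x, hx⟩
    have hu1 : ‖(u : ℤ_[p])‖ = 1 := PadicInt.norm_units u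
    obtain ⟨c, hc⟩ := exists_cube_root hp3 (u : ℤ_[p]) hu1 x hx
    refine ⟨algebraMap ℚ_[p] K ((c : ℤ_[p]) : ℚ_[p]), ?_⟩
    rw [Algebra.norm_algebraMap, hrank, ← PadicInt.coe_pow, hc]
end

section
/- Let X be a cubic surface over F_q given by Q(T_0,T_1,T_2)·T_3 + K(T_0,T_1,T_2) = 0 with Q a quadratic form not identically zero and K a cubic form, and suppose x = (0:0:0:1) lies on X. If x is a singular point of X, then X has a smooth F_q-rational point. -/
open MvPolynomial

/-- The homogeneous cubic `F = Q·T₃ + K` defining the surface `X ⊂ P³`. -/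
noncomputable def surfacePoly {q : ℕ} (Q K : MvPolynomial (Fin 3) (ZMod q)) :
    MvPolynomial (Fin 4) (ZMod q) :=
  rename Fin.castSucc Q * X 3 + rename Fin.castSucc K

lemma pderiv_last_rename_castSucc {R : Type*} [CommRing R] {n : ℕ}
    (p : MvPolynomial (Fin n) R) :
    pderiv (Fin.last n) (rename (Fin.castSucc) p) = 0 := by
  induction p using MvPolynomial.induction_on with
  | C a => simp
  | add p q hp hq => simp [hp, hq]
  | mul_X p i hp =>
      have : (Fin.castSucc i) ≠ Fin.last n := Fin.castSucc_lt_last i |>.ne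
      simp [hp, pderiv_X, Pi.single_eq_of_ne this]

/-- Let `X ⊂ P³` over `F_q` be given by `Q(T₀,T₁,T₂)·T₃ + K(T₀,T₁,T₂) = 0` with `Q` a
nonzero quadratic form and `K` a cubic form.  The point `x = (0:0:0:1)` lies on `X`; if it
is singular, then `X` has a smooth `F_q`-rational point. -/
theorem smooth_point_exists (q : ℕ) [Fact q.Prime]
    (Q K : MvPolynomial (Fin 3) (ZMod q))
    (hQ : Q.IsHomogeneous 2) (hQ0 : Q ≠ 0) (hK : K.IsHomogeneous 3)
    (hxX : eval (fun i : Fin 4 => if i = 3 then 1 else 0) (surfacePoly Q K) = 0)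
    (hsing : ∀ i : Fin 4,
      eval (fun j : Fin 4 => if j = 3 then 1 else 0) (pderiv i (surfacePoly Q K)) = 0) :
    ∃ y : Fin 4 → ZMod q, y ≠ 0 ∧ eval y (surfacePoly Q K) = 0 ∧
      ∃ i : Fin 4, eval y (pderiv i (surfacePoly Q K)) ≠ 0 := by
  have hqp : Fact q.Prime := inferInstance
  -- find a point where Q does not vanish
  have hcard : (2 : Cardinal) ≤ Cardinal.mk (ZMod q) := by
    haveI : Fintype (ZMod q) := ZMod.fintype q
    rw [Cardinal.mk_fintype]
    norm_cast
    rw [ZMod.card]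
    exact hqp.out.two_le
  have hex : ∃ a : Fin 3 → ZMod q, eval a Q ≠ 0 := by
    by_contra h
    push_neg at h
    exact hQ0 (hQ.eq_zero_of_forall_eval_eq_zero_of_le_card h hcard)
  obtain ⟨a, ha⟩ := hex
  set t : ZMod q := -(eval a K) / (eval a Q) with ht
  set y : Fin 4 → ZMod q := Fin.snoc a t with hy
  have h3 : (3 : Fin 4) = Fin.last 3 := rfl
  have hyc : y ∘ Fin.castSucc = a := by
    funext i; simp [hy, Fin.snoc_castSucc]
  have hevalQ : eval y (rename Fin.castSucc Q) = eval a Q := by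
    rw [eval_rename, hyc]
  have hevalK : eval y (rename Fin.castSucc K) = eval a K := by
    rw [eval_rename, hyc]
  have hy3 : y 3 = t := by
    rw [h3]; simp only [hy, Fin.snoc_last]
  have hpd : pderiv (3 : Fin 4) (surfacePoly Q K) = rename Fin.castSucc Q := by
    rw [surfacePoly, map_add, pderiv_mul, h3, pderiv_last_rename_castSucc,
      pderiv_last_rename_castSucc, ← h3, pderiv_X_self]
    ring
  refine ⟨y, ?_, ?_, ⟨3, ?_⟩⟩
  · -- y ≠ 0
    intro h0
    apply ha
    have ha0 : a = 0 := by
      funext i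
      have := congrFun h0 (Fin.castSucc i)
      simpa [hy, Fin.snoc_castSucc] using this
    rw [ha0]
    have h1 : eval (0 : Fin 3 → ZMod q) Q = constantCoeff Q := by
      simp [eval_zero]
    rw [h1]
    simpa [constantCoeff_eq] using hQ.coeff_eq_zero (d := 0) (by simp)
  · -- eval y F = 0
    have : eval y (surfacePoly Q K) = eval a Q * t + eval a K := by
      rw [surfacePoly]
      simp [hevalQ, hevalK, hy3]
    rw [this, ht]
    field_simp
    ring
  · -- derivative in direction 3 is nonzero
    rw [hpd, hevalQ]
    exact ha
end
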